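/- Let λ ∈ ℝ, λ ≠ 0, let T > 0 and S = ℝ × (0,T), and let u : S → ℝ be C³ in x and C¹ in t with continuous mixed derivatives, satisfying the Camassa–Holm equation u_t − u_{txx} + 3uu_x = 2u_xu_{xx} + uu_{xxx} on S; set m = u − u_{xx}. Suppose Ω ⊆ S is a nonempty open connected set such that (λ/2 + 1/(2λ) − m(p))·u_x(p) = 0 for every p ∈ Ω. Then u_x(p) = 0 for every p ∈ Ω, and there exists a constant c ∈ ℝ with u = c on Ω. If moreover u(x,t) → 0 as |x| → ∞ for each t ∈ (0,T) and u is not identically zero on S, then Ω is a proper subset of S. -/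

import Mathlib

open Metric Set Filter

private lemma deriv_zero_of_evconst {f : ℝ → ℝ} {c x : ℝ}
    (h : ∀ᶠ y in nhds x, f y = c) : deriv f x = 0 := by
  have h' : f =ᶠ[nhds x] fun _ => c := h
  rw [h'.deriv_eq, deriv_const]

private lemma const_of_ball {f : ℝ → ℝ} {a r : ℝ}
    (hd : ∀ y ∈ Metric.ball a r, DifferentiableAt ℝ f y)
    (h0 : ∀ y ∈ Metric.ball a r, deriv f y = 0)
    {x : ℝ} (hx : x ∈ Metric.ball a r) : f x = f a := by
  have hr : 0 < r := lt_of_le_of_lt dist_nonneg (Metric.mem_ball.1 hx)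
  have ha : a ∈ Metric.ball a r := Metric.mem_ball_self hr
  refine (convex_ball a r).is_const_of_fderivWithin_eq_zero
    (fun y hy => (hd y hy).differentiableWithinAt) ?_ hx ha
  intro y hy
  rw [fderivWithin_of_isOpen Metric.isOpen_ball hy]
  apply ContinuousLinearMap.ext_ring
  simp [fderiv_apply_one_eq_deriv, h0 y hy]

private lemma mem_ball_prod {p : ℝ × ℝ} {ε : ℝ} {x t : ℝ}
    (hx : x ∈ Metric.ball p.1 ε) (ht : t ∈ Metric.ball p.2 ε) :
    (x, t) ∈ Metric.ball p ε := by
  rw [← ball_prod_same]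
  exact ⟨hx, ht⟩


/-- Theorem 3.2(a).
Let `λ ∈ ℝ`, `λ ≠ 0`, `T > 0`, `S = ℝ × (0,T)`, and let `u` be `C³` in `x` and `C¹`
in `t` on `S` with continuous mixed derivatives, satisfying the Camassa–Holm
equation `u_t − u_{txx} + 3uu_x = 2u_xu_{xx} + uu_{xxx}` on `S`; set `m = u − u_xx`.
Suppose `Ω ⊆ S` is a nonempty open connected set on which
`(λ/2 + 1/(2λ) − m)·u_x = 0` everywhere (i.e. `ω_1∧ω_2` vanishes on `Ω`).
Then `u_x = 0` on `Ω`, and `u` is constant on `Ω`.  If moreover `u(x,t) → 0` as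
`|x| → ∞` for each `t ∈ (0,T)` and `u` is not identically zero on `S`, then `Ω`
is a proper subset of `S`. -/
theorem stmt_12 (lam : ℝ) (hlam : lam ≠ 0) (T : ℝ) (hT : 0 < T)
    (S : Set (ℝ × ℝ)) (hS : S = {p : ℝ × ℝ | p.2 ∈ Set.Ioo 0 T})
    (u ux uxx uxxx ut utxx mm : ℝ × ℝ → ℝ)
    (hux : ∀ p : ℝ × ℝ, ux p = deriv (fun x => u (x, p.2)) p.1)
    (huxx : ∀ p : ℝ × ℝ, uxx p = deriv (fun x => ux (x, p.2)) p.1)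
    (huxxx : ∀ p : ℝ × ℝ, uxxx p = deriv (fun x => uxx (x, p.2)) p.1)
    (hut : ∀ p : ℝ × ℝ, ut p = deriv (fun t => u (p.1, t)) p.2)
    (hutxx : ∀ p : ℝ × ℝ, utxx p = deriv (fun t => uxx (p.1, t)) p.2)
    (hmm : ∀ p : ℝ × ℝ, mm p = u p - uxx p)
    -- regularity on S: C³ in x, C¹ in t, continuous (mixed) derivatives
    (hregx : ∀ t ∈ Set.Ioo (0 : ℝ) T, ContDiff ℝ 3 (fun x => u (x, t)))
    (hregt : ∀ x : ℝ, ContDiffOn ℝ 1 (fun t => u (x, t)) (Set.Ioo 0 T))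
    (hregtxx : ∀ x : ℝ, ContDiffOn ℝ 1 (fun t => uxx (x, t)) (Set.Ioo 0 T))
    (hcont : ContinuousOn ux S ∧ ContinuousOn ut S
      ∧ ContinuousOn uxx S ∧ ContinuousOn utxx S)
    -- Camassa–Holm equation on S
    (hCH : ∀ p ∈ S,
        ut p - utxx p + 3 * u p * ux p = 2 * ux p * uxx p + u p * uxxx p)
    (Ω : Set (ℝ × ℝ)) (hΩS : Ω ⊆ S) (hΩopen : IsOpen Ω) (hΩne : Ω.Nonempty)
    (hΩconn : IsConnected Ω)
    -- ω₁∧ω₂ vanishes identically on Ω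
    (hvanish : ∀ p ∈ Ω, (lam / 2 + 1 / (2 * lam) - mm p) * ux p = 0) :
    (∀ p ∈ Ω, ux p = 0)
    ∧ (∃ c : ℝ, ∀ p ∈ Ω, u p = c)
    ∧ (((∀ t ∈ Set.Ioo (0 : ℝ) T,
            Filter.Tendsto (fun x => u (x, t)) Filter.atTop (nhds 0)
            ∧ Filter.Tendsto (fun x => u (x, t)) Filter.atBot (nhds 0))
        ∧ ¬ (∀ p ∈ S, u p = 0))
      → Ω ⊂ S) := by
  have hSopen : IsOpen S := by
    rw [hS]; exact isOpen_Ioo.preimage continuous_snd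
  have hmemT : ∀ p ∈ Ω, p.2 ∈ Set.Ioo (0 : ℝ) T := by
    intro p hp; have := hΩS hp; rwa [hS] at this
  have hc0 : lam / 2 + 1 / (2 * lam) ≠ 0 := by
    intro h
    have h2 : lam ^ 2 + 1 = 0 := by field_simp at h; nlinarith [h]
    nlinarith [sq_nonneg lam]
  set c0 := lam / 2 + 1 / (2 * lam) with hc0def
  -- differentiability in x of u, u_x, u_xx
  have hdiffx : ∀ p ∈ Ω, DifferentiableAt ℝ (fun x => u (x, p.2)) p.1 ∧
      DifferentiableAt ℝ (fun x => uxx (x, p.2)) p.1 := by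
    intro p hp
    have hreg := hregx p.2 (hmemT p hp)
    have h3 : ContDiff ℝ ((2:WithTop ℕ∞) + 1) (fun x => u (x, p.2)) := by
      convert hreg using 2; norm_num
    have h2 : ContDiff ℝ ((1:WithTop ℕ∞) + 1) (deriv (fun x => u (x, p.2))) := by
      have := (contDiff_succ_iff_deriv.1 h3).2.2
      rw [show (1:WithTop ℕ∞) + 1 = 2 by norm_num]; exact this
    have h1 : ContDiff ℝ 1 (deriv (deriv (fun x => u (x, p.2)))) :=
      (contDiff_succ_iff_deriv.1 h2).2.2
    have e1 : (fun x => ux (x, p.2)) = deriv (fun x => u (x, p.2)) :=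
      funext fun y => hux (y, p.2)
    have e2 : (fun x => uxx (x, p.2)) = deriv (deriv (fun x => u (x, p.2))) := by
      funext y
      rw [show uxx (y, p.2) = deriv (fun x => ux (x, p.2)) y from huxx (y, p.2), e1]
    refine ⟨hreg.differentiable (by norm_num) p.1, ?_⟩
    rw [e2]
    exact (h1.differentiable one_ne_zero) p.1
  -- differentiability in t of u, u_xx
  have hdifft : ∀ p ∈ Ω, DifferentiableAt ℝ (fun t => u (p.1, t)) p.2 ∧
      DifferentiableAt ℝ (fun t => uxx (p.1, t)) p.2 := by
    intro p hp
    have ht := hmemT p hp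
    have hn := isOpen_Ioo.mem_nhds ht
    exact ⟨(((hregt p.1).differentiableOn one_ne_zero) p.2 ht).differentiableAt hn,
      (((hregtxx p.1).differentiableOn one_ne_zero) p.2 ht).differentiableAt hn⟩
  -- Part 1 : ux = 0 on Ω
  have part1 : ∀ p ∈ Ω, ux p = 0 := by
    intro p hp
    by_contra hne
    -- find a ball inside Ω where ux ≠ 0
    have hcux : ContinuousAt ux p :=
      (hcont.1.continuousAt (hSopen.mem_nhds (hΩS hp)))
    have hev : ∀ᶠ q in nhds p, ux q ≠ 0 := hcux.eventually_ne hne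
    have hev2 : ∀ᶠ q in nhds p, q ∈ Ω := hΩopen.mem_nhds hp
    obtain ⟨ε, hε, hball⟩ := Metric.eventually_nhds_iff_ball.1 (hev.and hev2)
    -- mm = c0 on the ball
    have hmmc : ∀ q ∈ Metric.ball p ε, mm q = c0 := by
      intro q hq
      obtain ⟨hq1, hq2⟩ := hball q hq
      have := hvanish q hq2
      rcases mul_eq_zero.1 this with h | h
      · linarith [h]
      · exact absurd h hq1
    -- m_x = 0 at p
    have hmx : deriv (fun x => mm (x, p.2)) p.1 = 0 := by
      apply deriv_zero_of_evconst (c := c0)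
      filter_upwards [Metric.ball_mem_nhds p.1 hε] with y hy
      exact hmmc (y, p.2) (mem_ball_prod hy (Metric.mem_ball_self hε))
    have hmt : deriv (fun t => mm (p.1, t)) p.2 = 0 := by
      apply deriv_zero_of_evconst (c := c0)
      filter_upwards [Metric.ball_mem_nhds p.2 hε] with y hy
      exact hmmc (p.1, y) (mem_ball_prod (Metric.mem_ball_self hε) hy)
    -- compute the derivatives of mm
    obtain ⟨hdu, hduxx⟩ := hdiffx p hp
    obtain ⟨hdtu, hdtuxx⟩ := hdifft p hp
    have exm : (fun x => mm (x, p.2)) = fun x => u (x, p.2) - uxx (x, p.2) :=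
      funext fun y => hmm (y, p.2)
    have etm : (fun t => mm (p.1, t)) = fun t => u (p.1, t) - uxx (p.1, t) :=
      funext fun y => hmm (p.1, y)
    have hmx' : ux p - uxxx p = 0 := by
      rw [exm, deriv_fun_sub hdu hduxx] at hmx
      rwa [hux p, huxxx p]
    have hmt' : ut p - utxx p = 0 := by
      rw [etm, deriv_fun_sub hdtu hdtuxx] at hmt
      rwa [hut p, hutxx p]
    have hch := hCH p (hΩS hp)
    have hmc : u p - uxx p = c0 := by
      rw [← hmm p]
      exact hmmc p (Metric.mem_ball_self hε)
    have huxne : ux p ≠ 0 := hne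
    -- combine: 2 * ux p * c0 = 0
    have : ux p * c0 = 0 := by
      linear_combination hch / 2 - hmt' / 2 - (u p / 2) * hmx' - ux p * hmc
    rcases mul_eq_zero.1 this with h | h
    · exact hne h
    · exact hc0 h
  -- ball inside Ω around each point
  have hballΩ : ∀ p ∈ Ω, ∃ ε > 0, Metric.ball p ε ⊆ Ω := fun p hp =>
    Metric.isOpen_iff.1 hΩopen p hp
  -- uxx = 0 on Ω
  have huxx0 : ∀ p ∈ Ω, uxx p = 0 := by
    intro p hp
    obtain ⟨ε, hε, hb⟩ := hballΩ p hp
    rw [huxx p]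
    apply deriv_zero_of_evconst (c := 0)
    filter_upwards [Metric.ball_mem_nhds p.1 hε] with y hy
    exact part1 (y, p.2) (hb (mem_ball_prod hy (Metric.mem_ball_self hε)))
  have huxxx0 : ∀ p ∈ Ω, uxxx p = 0 := by
    intro p hp
    obtain ⟨ε, hε, hb⟩ := hballΩ p hp
    rw [huxxx p]
    apply deriv_zero_of_evconst (c := 0)
    filter_upwards [Metric.ball_mem_nhds p.1 hε] with y hy
    exact huxx0 (y, p.2) (hb (mem_ball_prod hy (Metric.mem_ball_self hε)))
  have hutxx0 : ∀ p ∈ Ω, utxx p = 0 := by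
    intro p hp
    obtain ⟨ε, hε, hb⟩ := hballΩ p hp
    rw [hutxx p]
    apply deriv_zero_of_evconst (c := 0)
    filter_upwards [Metric.ball_mem_nhds p.2 hε] with y hy
    exact huxx0 (p.1, y) (hb (mem_ball_prod (Metric.mem_ball_self hε) hy))
  have hut0 : ∀ p ∈ Ω, ut p = 0 := by
    intro p hp
    have hch := hCH p (hΩS hp)
    have h1 := part1 p hp
    have h2 := huxx0 p hp
    have h3 := huxxx0 p hp
    have h4 := hutxx0 p hp
    rw [h1, h2, h3, h4] at hch
    linarith [hch]
  -- u locally constant on Ω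
  have hloc : ∀ p ∈ Ω, ∃ ε > 0, ∀ q ∈ Metric.ball p ε, u q = u p := by
    intro p hp
    obtain ⟨ε, hε, hb⟩ := hballΩ p hp
    refine ⟨ε, hε, fun q hq => ?_⟩
    obtain ⟨hq1, hq2⟩ : q.1 ∈ Metric.ball p.1 ε ∧ q.2 ∈ Metric.ball p.2 ε := by
      rw [← ball_prod_same] at hq; exact hq
    have step1 : u (q.1, q.2) = u (p.1, q.2) := by
      apply const_of_ball (f := fun x => u (x, q.2)) (a := p.1) (r := ε)
      · intro y hy
        exact (hdiffx (y, q.2) (hb (mem_ball_prod hy hq2))).1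
      · intro y hy
        have := part1 (y, q.2) (hb (mem_ball_prod hy hq2))
        rwa [hux (y, q.2)] at this
      · exact hq1
    have step2 : u (p.1, q.2) = u (p.1, p.2) := by
      apply const_of_ball (f := fun t => u (p.1, t)) (a := p.2) (r := ε)
      · intro y hy
        exact (hdifft (p.1, y) (hb (mem_ball_prod (Metric.mem_ball_self hε) hy))).1
      · intro y hy
        have := hut0 (p.1, y) (hb (mem_ball_prod (Metric.mem_ball_self hε) hy))
        rwa [hut (p.1, y)] at this
      · exact hq2
    calc u q = u (q.1, q.2) := by rw [Prod.mk.eta]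
    _ = u (p.1, q.2) := step1
    _ = u (p.1, p.2) := step2
    _ = u p := by rw [Prod.mk.eta]
  -- constancy on Ω via connectedness
  obtain ⟨p₀, hp₀⟩ := hΩne
  have hconst : ∀ p ∈ Ω, u p = u p₀ := by
    haveI : PreconnectedSpace Ω := Subtype.preconnectedSpace hΩconn.isPreconnected
    have hlc : IsLocallyConstant (fun q : Ω => u q) := by
      rw [IsLocallyConstant.iff_exists_open]
      intro x
      obtain ⟨ε, hε, hb⟩ := hloc x.1 x.2
      refine ⟨Subtype.val ⁻¹' Metric.ball x.1 ε, (Metric.isOpen_ball).preimage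
        continuous_subtype_val, Metric.mem_ball_self hε, fun y hy => hb y.1 hy⟩
    intro p hp
    simpa using congrFun (hlc.eq_const ⟨p₀, hp₀⟩) ⟨p, hp⟩
  refine ⟨part1, ⟨u p₀, hconst⟩, ?_⟩
  rintro ⟨hdecay, hnz⟩
  refine Set.ssubset_iff_subset_ne.2 ⟨hΩS, fun heq => ?_⟩
  have htmid : (T / 2) ∈ Set.Ioo (0 : ℝ) T := ⟨by linarith, by linarith⟩
  have hmem : ∀ x : ℝ, (x, T / 2) ∈ Ω := fun x => by
    rw [heq, hS]; exact htmid
  have hc0' : u p₀ = 0 := by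
    have htend := (hdecay (T / 2) htmid).1
    have he : ∀ x : ℝ, u (x, T / 2) = u p₀ := fun x => hconst _ (hmem x)
    simp only [he] at htend
    exact tendsto_nhds_unique tendsto_const_nhds htend
  apply hnz
  intro p hp
  have hp' : p ∈ Ω := heq.symm ▸ hp
  rw [hconst p hp', hc0']
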